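/- For every 2×2 complex matrix M: tr([M, B₂]R) − tr(M B₂) = tr(B₂) · tr(M(R − I)). -/

import Mathlib

noncomputable section

/-- The rank-one matrix `R = (−1/(b₁d₂ − d₁b₂)) · (b₁, d₁)ᵀ · (−d₂, b₂)`
built from the second columns `(b, d)` of `B₁` and `B₂`
(here `b_k = (B_k)₁₂`, `d_k = (B_k)₂₂`). -/
def Rmat (B₁ B₂ : Matrix (Fin 2) (Fin 2) ℂ) : Matrix (Fin 2) (Fin 2) ℂ :=
  (-(B₁ 0 1 * B₂ 1 1 - B₁ 1 1 * B₂ 0 1)⁻¹) •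
    Matrix.vecMulVec ![B₁ 0 1, B₁ 1 1] ![-(B₂ 1 1), B₂ 0 1]

/-- For every `2×2` complex matrix `M`:
`tr([M, B₂]R) − tr(M B₂) = tr B₂ · tr(M(R − I))`. -/
theorem trace_comm_B2_R (B₁ B₂ : Matrix (Fin 2) (Fin 2) ℂ)
    (h₁ : B₁.det = 0) (h₂ : B₂.det = 0)
    (hden : B₁ 0 1 * B₂ 1 1 - B₁ 1 1 * B₂ 0 1 ≠ 0)
    (M : Matrix (Fin 2) (Fin 2) ℂ) :
    ((M * B₂ - B₂ * M) * Rmat B₁ B₂).trace - (M * B₂).trace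
      = B₂.trace * (M * (Rmat B₁ B₂ - 1)).trace := by
  simp only [Matrix.det_fin_two] at h₁ h₂
  simp only [Rmat, Matrix.trace_fin_two, Matrix.mul_apply, Matrix.sub_apply,
    Matrix.smul_apply, Matrix.vecMulVec_apply, Matrix.one_apply, Fin.sum_univ_two,
    Matrix.cons_val_zero, Matrix.cons_val_one, Matrix.head_cons, smul_eq_mul]
  have hden' : B₁ 0 1 * B₂ 1 1 - B₂ 0 1 * B₁ 1 1 ≠ 0 := by
    intro h; apply hden; linear_combination h
  simp only [Fin.isValue, if_true, one_ne_zero, zero_ne_one, if_false]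
  field_simp

  linear_combination (-(B₁ 0 1)*M 0 0 - 2*B₁ 1 1*M 0 1 + B₁ 0 1*M 1 1) * h₂
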